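/- If G is a chordal graph and ℓ ≥ 0, then c'_ℓ(G) = c_ℓ(G); moreover, once a single cop is within distance ℓ of the robber, that cop alone can capture the robber. -/

import Mathlib

namespace CopsRobber

open Classical

noncomputable section

variable {V : Type*}

/-- Observation available to the cops: the robber's position is revealed iff some cop
is within graph distance `ℓ` of the robber. -/
def obs (G : SimpleGraph V) (ℓ : ℕ∞) {k : ℕ} (p : Fin k → V) (r : V) : Option V :=
  if ∃ i, (G.dist (p i) r : ℕ∞) ≤ ℓ then some r else none

/-- A strategy for `k` cops on `G`: initial positions, and a move function depending on the
history of observations and the current cop positions.  Each cop moves along an edge or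
passes. -/
structure CopStrategy (G : SimpleGraph V) (k : ℕ) where
  init : Fin k → V
  move : List (Option V) → (Fin k → V) → Fin k → V
  valid : ∀ h p i, move h p i = p i ∨ G.Adj (p i) (move h p i)

/-- A robber trajectory: in each round the robber moves along an edge or passes. -/
def RobberWalk (G : SimpleGraph V) (R : ℕ → V) : Prop :=
  ∀ t, R (t + 1) = R t ∨ G.Adj (R t) (R (t + 1))

/-- The play of the game: cop positions and observation history at the end of each round.
In round `t+1` the cops move first (observing the robber at his position of round `t` if
within range), then the robber moves (and is observed at his new position if within range). -/
def play (G : SimpleGraph V) (ℓ : ℕ∞) {k : ℕ} (σ : CopStrategy G k) (R : ℕ → V) :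
    ℕ → (Fin k → V) × List (Option V)
  | 0 => (σ.init, [obs G ℓ σ.init (R 0)])
  | t + 1 =>
    let s := play G ℓ σ R t
    let p := σ.move s.2 s.1
    (p, (s.2 ++ [obs G ℓ p (R t)]) ++ [obs G ℓ p (R (t + 1))])

/-- Positions of the cops at the end of round `t`. -/
def copsAt (G : SimpleGraph V) (ℓ : ℕ∞) {k : ℕ} (σ : CopStrategy G k) (R : ℕ → V)
    (t : ℕ) : Fin k → V :=
  (play G ℓ σ R t).1

/-- The cops capture the robber: some cop occupies the robber's vertex, either
simultaneously or by moving onto it mid-round. -/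
def Captures (G : SimpleGraph V) (ℓ : ℕ∞) {k : ℕ} (σ : CopStrategy G k) (R : ℕ → V) : Prop :=
  ∃ t i, copsAt G ℓ σ R t i = R t ∨ copsAt G ℓ σ R (t + 1) i = R t

/-- The cops see the robber: some cop comes within distance `ℓ` of the robber. -/
def Sees (G : SimpleGraph V) (ℓ : ℕ∞) {k : ℕ} (σ : CopStrategy G k) (R : ℕ → V) : Prop :=
  ∃ t i, (G.dist (copsAt G ℓ σ R t i) (R t) : ℕ∞) ≤ ℓ ∨
    (G.dist (copsAt G ℓ σ R (t + 1) i) (R t) : ℕ∞) ≤ ℓ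

/-- `c_ℓ(G)`: the minimum number of cops that guarantee capture of the robber in the
`ℓ`-visibility Cops and Robber game. -/
def visCopNumber (G : SimpleGraph V) (ℓ : ℕ∞) : ℕ :=
  sInf {k | ∃ σ : CopStrategy G k, ∀ R, RobberWalk G R → Captures G ℓ σ R}

/-- `c'_ℓ(G)`: the minimum number of cops that guarantee seeing the robber in the
`ℓ`-visibility Cops and Robber game. -/
def visSeeNumber (G : SimpleGraph V) (ℓ : ℕ∞) : ℕ :=
  sInf {k | ∃ σ : CopStrategy G k, ∀ R, RobberWalk G R → Sees G ℓ σ R}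

/-- The classical cop number: the game with full visibility. -/
def copNumber (G : SimpleGraph V) : ℕ := visCopNumber G ⊤

end
end CopsRobber


/-- `v` is a simplicial elimination ordering of `G` (written `v n, …, v 1` in the paper):
for each `i`, the neighbours of `v i` of smaller index form a clique. -/
def IsSimplicialElimOrdering {V : Type*} (G : SimpleGraph V) {n : ℕ} (v : Fin n ≃ V) : Prop :=
  ∀ i j k : Fin n, j < i → k < i → G.Adj (v i) (v j) → G.Adj (v i) (v k) → v j ≠ v k →
    G.Adj (v j) (v k)

/-- A graph is chordal iff it admits a simplicial elimination ordering. -/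
def Chordal {V : Type*} (G : SimpleGraph V) : Prop :=
  ∃ (n : ℕ) (v : Fin n ≃ V), IsSimplicialElimOrdering G v


namespace CRAux

open SimpleGraph

variable {V : Type*}

lemma adj_dist_one {G : SimpleGraph V} {u v : V} (h : G.Adj u v) : G.dist u v = 1 :=
  dist_eq_one_iff_adj.mpr h

lemma exists_toward {G : SimpleGraph V} (hG : G.Connected) {c x : V} (h : c ≠ x) :
    ∃ w, G.Adj c w ∧ G.dist w x + 1 = G.dist c x := by
  have hd : G.dist c x ≠ 0 := by
    simp [hG.dist_eq_zero_iff, h]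
  obtain ⟨p, hp⟩ := SimpleGraph.exists_walk_of_dist_ne_zero hd
  cases p with
  | nil => simp at hp; simp at hd
  | cons ha q =>
    rename_i w
    refine ⟨w, ha, le_antisymm ?_ ?_⟩
    · have h1 : G.dist w x ≤ q.length := SimpleGraph.dist_le q
      have : q.length + 1 = G.dist c x := by simpa using hp
      omega
    · calc G.dist c x ≤ G.dist c w + G.dist w x := hG.dist_triangle
        _ ≤ 1 + G.dist w x := by
            have := adj_dist_one ha; omega
        _ = G.dist w x + 1 := by omega

open Classical in
noncomputable def toward (G : SimpleGraph V) (c x : V) : V :=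
  if h : ∃ w, G.Adj c w ∧ G.dist w x + 1 = G.dist c x then h.choose else c

lemma toward_self_or_adj (G : SimpleGraph V) (c x : V) :
    toward G c x = c ∨ G.Adj c (toward G c x) := by
  unfold toward
  split
  · next h => exact Or.inr h.choose_spec.1
  · exact Or.inl rfl

lemma toward_spec {G : SimpleGraph V} (hG : G.Connected) {c x : V} (h : c ≠ x) :
    G.Adj c (toward G c x) ∧ G.dist (toward G c x) x + 1 = G.dist c x := by
  unfold toward
  split
  · next hh => exact hh.choose_spec
  · next hh => exact absurd (exists_toward hG h) hh

open Classical in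
noncomputable def step (G : SimpleGraph V) (c a b : V) : V :=
  if c = b then c
  else if G.Adj c b then b
  else if G.dist c b = G.dist c a + 1 ∧ G.Adj a b then toward G c a
  else toward G c b

lemma step_self_or_adj (G : SimpleGraph V) (c a b : V) :
    step G c a b = c ∨ G.Adj c (step G c a b) := by
  unfold step
  by_cases h1 : c = b
  · simp [h1]
  rw [if_neg h1]
  by_cases h2 : G.Adj c b
  · rw [if_pos h2]; exact Or.inr h2
  rw [if_neg h2]
  split
  · exact (toward_self_or_adj G c a).imp id id
  · exact (toward_self_or_adj G c b).imp id id

lemma step_dist {G : SimpleGraph V} (hG : G.Connected) {c b : V} (a : V) (h : c ≠ b) :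
    G.dist (step G c a b) b + 1 = G.dist c b := by
  unfold step
  rw [if_neg h]
  by_cases hadj : G.Adj c b
  · rw [if_pos hadj]
    simp [SimpleGraph.dist_self, adj_dist_one hadj]
  rw [if_neg hadj]
  have hb2 : 2 ≤ G.dist c b := by
    have h0 : G.dist c b ≠ 0 := by simp [hG.dist_eq_zero_iff, h]
    have h1 : G.dist c b ≠ 1 := fun hh => hadj (dist_eq_one_iff_adj.mp hh)
    omega
  split
  · next hc =>
    obtain ⟨hd, hab⟩ := hc
    have hca : c ≠ a := by
      intro hh
      rw [← hh, SimpleGraph.dist_self] at hd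
      omega
    obtain ⟨ht1, ht2⟩ := toward_spec hG hca
    -- dist (toward) b ≤ dist (toward) a + 1 = dist c a = dist c b - 1
    have hub : G.dist (toward G c a) b ≤ G.dist c a := by
      calc G.dist (toward G c a) b ≤ G.dist (toward G c a) a + G.dist a b := hG.dist_triangle
        _ = G.dist (toward G c a) a + 1 := by rw [adj_dist_one hab]
        _ = G.dist c a := ht2
    have hlb : G.dist c b ≤ 1 + G.dist (toward G c a) b := by
      calc G.dist c b ≤ G.dist c (toward G c a) + G.dist (toward G c a) b := hG.dist_triangle
        _ ≤ 1 + G.dist (toward G c a) b := by have := adj_dist_one ht1; omega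
    omega
  · exact (toward_spec hG h).2

lemma step_dist_a {G : SimpleGraph V} (hG : G.Connected) {c a b : V} (h : c ≠ b)
    (hadj : ¬ G.Adj c b) (hd : G.dist c b = G.dist c a + 1) (hab : G.Adj a b) :
    G.dist (step G c a b) a + 1 = G.dist c a := by
  unfold step
  rw [if_neg h, if_neg hadj, if_pos ⟨hd, hab⟩]
  have hca : c ≠ a := by
    intro hh
    rw [← hh, SimpleGraph.dist_self] at hd
    simp at hd
    exact hadj hd
  exact (toward_spec hG hca).2

lemma no_flight [Fintype V] {G : SimpleGraph V} (hch : Chordal G) (q : ℕ → V)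
    (hadj : ∀ t, G.Adj (q t) (q (t + 1))) (hw : ∀ t, G.dist (q t) (q (t + 2)) = 2) : False := by
  classical
  obtain ⟨n, v, hv⟩ := hch
  set S : Set V := {x | ∀ N, ∃ t, N ≤ t ∧ q t = x} with hS
  have hSne : ∃ x, x ∈ S := by
    obtain ⟨y, hy⟩ := Finite.exists_infinite_fiber q
    refine ⟨y, fun N => ?_⟩
    have : (q ⁻¹' {y}).Infinite := Set.infinite_coe_iff.mp hy
    obtain ⟨b, hb, hb2⟩ := this.exists_gt N
    exact ⟨b, le_of_lt hb2, hb⟩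
  have hcompl : ∀ x : V, x ∉ S → ∃ N, ∀ t, N ≤ t → q t ≠ x := by
    intro x hx
    simp only [hS, Set.mem_setOf_eq, not_forall] at hx
    obtain ⟨N, hN⟩ := hx
    exact ⟨N, fun t ht hqt => hN ⟨t, ht, hqt⟩⟩
  choose NF hNF using hcompl
  set T : ℕ := Finset.univ.sup (fun x : V => if hx : x ∈ S then 0 else NF x hx) with hT
  have hTin : ∀ t, T ≤ t → q t ∈ S := by
    intro t ht
    by_contra hqt
    have hle : (if hx : q t ∈ S then 0 else NF (q t) hx) ≤ T :=
      Finset.le_sup (f := fun x : V => if hx : x ∈ S then 0 else NF x hx)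
        (Finset.mem_univ (q t))
    rw [dif_neg hqt] at hle
    exact hNF (q t) hqt t (le_trans hle ht) rfl
  -- maximal-index recurrent vertex
  set F : Finset V := Finset.univ.filter (· ∈ S) with hF
  have hFne : F.Nonempty := by
    obtain ⟨x, hx⟩ := hSne
    exact ⟨x, by simp [hF, hx]⟩
  obtain ⟨xs, hxsF, hmax⟩ := F.exists_max_image (fun x => v.symm x) hFne
  have hxsS : xs ∈ S := by simpa [hF] using hxsF
  obtain ⟨t, htT, hqt⟩ := hxsS (T + 1)
  have ht1 : 1 ≤ t := le_trans (by omega) htT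
  have hx1 : q (t - 1) ∈ S := hTin _ (by omega)
  have hy1 : q (t + 1) ∈ S := hTin _ (by omega)
  have hadjx : G.Adj (q t) (q (t - 1)) := by
    have := hadj (t - 1)
    rw [Nat.sub_add_cancel ht1] at this
    exact this.symm
  have hadjy : G.Adj (q t) (q (t + 1)) := hadj t
  have hw' : G.dist (q (t - 1)) (q (t + 1)) = 2 := by
    have := hw (t - 1)
    have h2 : t - 1 + 2 = t + 1 := by omega
    rw [h2] at this
    exact this
  have hne : q (t - 1) ≠ q (t + 1) := by
    intro hh
    rw [hh] at hw'
    simp [SimpleGraph.dist_self] at hw'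
  have hmem : ∀ z : V, z ∈ S → v.symm z ≤ v.symm xs := by
    intro z hz
    exact hmax z (by simp [hF, hz])
  have hlt1 : v.symm (q (t - 1)) < v.symm xs := by
    refine lt_of_le_of_ne (hmem _ hx1) (fun hh => ?_)
    have : q (t - 1) = xs := by
      have := congrArg v hh; simpa using this
    rw [← hqt] at this
    exact G.irrefl (this ▸ hadjx)
  have hlt2 : v.symm (q (t + 1)) < v.symm xs := by
    refine lt_of_le_of_ne (hmem _ hy1) (fun hh => ?_)
    have : q (t + 1) = xs := by
      have := congrArg v hh; simpa using this
    rw [← hqt] at this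
    exact G.irrefl (this ▸ hadjy)
  have hadj' : G.Adj (q (t - 1)) (q (t + 1)) := by
    have := hv (v.symm xs) (v.symm (q (t - 1))) (v.symm (q (t + 1))) hlt1 hlt2
      (by simpa [hqt] using hadjx) (by simpa [hqt] using hadjy) (by simpa using hne)
    simpa using this
  rw [adj_dist_one hadj'] at hw'
  omega

end CRAux

section Game

open CopsRobber SimpleGraph

variable {V : Type*} (G : SimpleGraph V) (ℓ : ℕ∞) {k : ℕ} (σ : CopsRobber.CopStrategy G k)
  (R : ℕ → V)

noncomputable def hybMove (h : List (Option V)) (p : Fin k → V) (i : Fin k) : V :=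
  (h.getD (h.length - 1) none).elim
    ((h.getD (h.length - 2) none).elim (σ.move h p i)
      (fun b => CRAux.step G (p i) ((h.getD (h.length - 4) none).getD b) b))
    (fun b => CRAux.step G (p i) ((h.getD (h.length - 2) none).getD b) b)

noncomputable def hyb : CopsRobber.CopStrategy G k where
  init := σ.init
  move := hybMove G σ
  valid := by
    intro h p i
    unfold hybMove
    cases hE : h.getD (h.length - 1) none with
    | some b =>
      simp only [Option.elim]
      exact (CRAux.step_self_or_adj G (p i) _ b).imp id id
    | none =>
      cases hM : h.getD (h.length - 2) none with
      | some b =>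
        simp only [Option.elim]
        exact (CRAux.step_self_or_adj G (p i) _ b).imp id id
      | none =>
        simp only [Option.elim]
        exact σ.valid h p i

lemma obs_some {p : Fin k → V} {r : V} (h : ∃ i, (G.dist (p i) r : ℕ∞) ≤ ℓ) :
    obs G ℓ p r = some r := if_pos h

lemma obs_none {p : Fin k → V} {r : V} (h : ¬ ∃ i, (G.dist (p i) r : ℕ∞) ≤ ℓ) :
    obs G ℓ p r = none := if_neg h

lemma hist_length (τ : CopsRobber.CopStrategy G k) (t : ℕ) :
    ((play G ℓ τ R t).2).length = 2 * t + 1 := by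
  induction t with
  | zero => simp [play]
  | succ t ih => simp [play, ih]; omega

lemma copsAt_succ (τ : CopsRobber.CopStrategy G k) (t : ℕ) :
    copsAt G ℓ τ R (t + 1) = τ.move (play G ℓ τ R t).2 (copsAt G ℓ τ R t) := rfl

lemma getD_concat2_snd {α : Type*} (l : List α) (x y d : α) :
    (l ++ [x] ++ [y]).getD (l.length + 1) d = y := by
  rw [List.getD_append_right _ _ _ _ (by simp)]
  simp

lemma getD_concat2_fst {α : Type*} (l : List α) (x y d : α) :
    (l ++ [x] ++ [y]).getD l.length d = x := by
  rw [List.getD_append _ _ _ _ (by simp)]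
  rw [List.getD_append_right _ _ _ _ (by simp)]
  simp

lemma getD_concat2_lt {α : Type*} (l : List α) (x y d : α) (j : ℕ) (h : j < l.length) :
    (l ++ [x] ++ [y]).getD j d = l.getD j d := by
  rw [List.getD_append _ _ _ _ (by simp; omega), List.getD_append _ _ _ _ h]

lemma hist_end (τ : CopsRobber.CopStrategy G k) (t : ℕ) :
    ((play G ℓ τ R t).2).getD (2 * t) none = obs G ℓ (copsAt G ℓ τ R t) (R t) := by
  cases t with
  | zero => simp [play, copsAt]
  | succ t =>
    show ((((play G ℓ τ R t).2 ++ [obs G ℓ _ (R t)]) ++ [obs G ℓ _ (R (t+1))]).getD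
      (2 * (t+1)) none) = _
    have hl : 2 * (t + 1) = ((play G ℓ τ R t).2).length + 1 := by
      rw [hist_length]; omega
    rw [hl, getD_concat2_snd]
    rfl

lemma hist_mid (τ : CopsRobber.CopStrategy G k) (t : ℕ) :
    ((play G ℓ τ R (t + 1)).2).getD (2 * t + 1) none
      = obs G ℓ (copsAt G ℓ τ R (t + 1)) (R t) := by
  show ((((play G ℓ τ R t).2 ++ [obs G ℓ _ (R t)]) ++ [obs G ℓ _ (R (t+1))]).getD
      (2 * t + 1) none) = _
  have hl : 2 * t + 1 = ((play G ℓ τ R t).2).length := by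
    rw [hist_length]
  rw [hl, getD_concat2_fst]
  rfl

lemma hist_stable (τ : CopsRobber.CopStrategy G k) (t t' j : ℕ) (h : t ≤ t')
    (hj : j < 2 * t + 1) :
    ((play G ℓ τ R t').2).getD j none = ((play G ℓ τ R t).2).getD j none := by
  induction t' with
  | zero =>
    have : t = 0 := by omega
    rw [this]
  | succ t' ih =>
    rcases Nat.eq_or_lt_of_le h with h1 | h1
    · rw [h1]
    · have ht' : t ≤ t' := by omega
      rw [← ih ht']
      show ((((play G ℓ τ R t').2 ++ [obs G ℓ _ (R t')]) ++ [obs G ℓ _ (R (t'+1))]).getD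
        j none) = _
      rw [getD_concat2_lt _ _ _ _ _ (by rw [hist_length]; omega)]


lemma move_E0
    (hE : ∃ i, (G.dist (copsAt G ℓ (hyb G σ) R 0 i) (R 0) : ℕ∞) ≤ ℓ) (i : Fin k) :
    copsAt G ℓ (hyb G σ) R 1 i
      = CRAux.step G (copsAt G ℓ (hyb G σ) R 0 i) (R 0) (R 0) := by
  rw [copsAt_succ]
  show hybMove G σ (play G ℓ (hyb G σ) R 0).2 (copsAt G ℓ (hyb G σ) R 0) i = _
  unfold hybMove
  have h0 : (play G ℓ (hyb G σ) R 0).2 = [obs G ℓ (copsAt G ℓ (hyb G σ) R 0) (R 0)] := rfl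
  rw [h0, obs_some G ℓ hE]
  simp

lemma move_E (t : ℕ) (ht : 1 ≤ t)
    (hE : ∃ i, (G.dist (copsAt G ℓ (hyb G σ) R t i) (R t) : ℕ∞) ≤ ℓ) (i : Fin k) :
    copsAt G ℓ (hyb G σ) R (t + 1) i
      = CRAux.step G (copsAt G ℓ (hyb G σ) R t i)
          ((obs G ℓ (copsAt G ℓ (hyb G σ) R t) (R (t - 1))).getD (R t)) (R t) := by
  obtain ⟨t', rfl⟩ : ∃ t', t = t' + 1 := ⟨t - 1, by omega⟩
  rw [copsAt_succ]
  show hybMove G σ (play G ℓ (hyb G σ) R (t'+1)).2 (copsAt G ℓ (hyb G σ) R (t'+1)) i = _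
  unfold hybMove
  rw [hist_length]
  have e1 : 2 * (t' + 1) + 1 - 1 = 2 * (t' + 1) := by omega
  have e2 : 2 * (t' + 1) + 1 - 2 = 2 * t' + 1 := by omega
  rw [e1, e2, hist_end, hist_mid, obs_some G ℓ hE]
  simp

lemma move_M (t : ℕ) (ht : 1 ≤ t)
    (hE : ¬ ∃ i, (G.dist (copsAt G ℓ (hyb G σ) R t i) (R t) : ℕ∞) ≤ ℓ)
    (hM : ∃ i, (G.dist (copsAt G ℓ (hyb G σ) R t i) (R (t - 1)) : ℕ∞) ≤ ℓ) (i : Fin k) :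
    ∃ a, copsAt G ℓ (hyb G σ) R (t + 1) i
      = CRAux.step G (copsAt G ℓ (hyb G σ) R t i) a (R (t - 1)) := by
  obtain ⟨t', rfl⟩ : ∃ t', t = t' + 1 := ⟨t - 1, by omega⟩
  refine ⟨((((play G ℓ (hyb G σ) R (t'+1)).2).getD (2 * (t'+1) + 1 - 4) none)).getD
    (R (t' + 1 - 1)), ?_⟩
  rw [copsAt_succ]
  show hybMove G σ (play G ℓ (hyb G σ) R (t'+1)).2 (copsAt G ℓ (hyb G σ) R (t'+1)) i = _
  unfold hybMove
  rw [hist_length]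
  have e1 : 2 * (t' + 1) + 1 - 1 = 2 * (t' + 1) := by omega
  have e2 : 2 * (t' + 1) + 1 - 2 = 2 * t' + 1 := by omega
  rw [e1, e2, hist_end, hist_mid, obs_none G ℓ hE, obs_some G ℓ (by simpa using hM)]
  simp [hist_length, e2]

lemma move_none (t : ℕ)
    (hE : ¬ ∃ i, (G.dist (copsAt G ℓ (hyb G σ) R t i) (R t) : ℕ∞) ≤ ℓ)
    (hM : ∀ t', t = t' + 1 → ¬ ∃ i, (G.dist (copsAt G ℓ (hyb G σ) R t i) (R t') : ℕ∞) ≤ ℓ) :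
    copsAt G ℓ (hyb G σ) R (t + 1)
      = σ.move (play G ℓ (hyb G σ) R t).2 (copsAt G ℓ (hyb G σ) R t) := by
  funext i
  rw [copsAt_succ]
  show hybMove G σ (play G ℓ (hyb G σ) R t).2 (copsAt G ℓ (hyb G σ) R t) i = _
  cases t with
  | zero =>
    unfold hybMove
    have h0 : (play G ℓ (hyb G σ) R 0).2 = [obs G ℓ (copsAt G ℓ (hyb G σ) R 0) (R 0)] := rfl
    rw [h0, obs_none G ℓ hE]
    simp
  | succ t' =>
    unfold hybMove
    rw [hist_length]
    have e1 : 2 * (t' + 1) + 1 - 1 = 2 * (t' + 1) := by omega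
    have e2 : 2 * (t' + 1) + 1 - 2 = 2 * t' + 1 := by omega
    rw [e1, e2, hist_end, hist_mid, obs_none G ℓ hE, obs_none G ℓ (hM t' rfl)]
    simp

end Game

section MainChase

open CopsRobber SimpleGraph

lemma captures_of_sight {V : Type*} [Fintype V] {G : SimpleGraph V} (hG : G.Connected)
    (hch : Chordal G) (ℓn : ℕ) {k : ℕ} (σ : CopsRobber.CopStrategy G k) (R : ℕ → V)
    (hR : CopsRobber.RobberWalk G R)
    (hsight : ∃ s i, (G.dist (copsAt G (ℓn : ℕ∞) (hyb G σ) R s i) (R s) : ℕ∞) ≤ (ℓn : ℕ∞)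
      ∨ ∃ s', s = s' + 1 ∧
        (G.dist (copsAt G (ℓn : ℕ∞) (hyb G σ) R s i) (R s') : ℕ∞) ≤ (ℓn : ℕ∞)) :
    CopsRobber.Captures G (ℓn : ℕ∞) (hyb G σ) R := by
  classical
  by_contra H
  rw [CopsRobber.Captures] at H
  push_neg at H
  have H1 : ∀ t (i : Fin k), copsAt G (ℓn : ℕ∞) (hyb G σ) R t i ≠ R t := fun t i => (H t i).1
  have H2 : ∀ t (i : Fin k), copsAt G (ℓn : ℕ∞) (hyb G σ) R (t + 1) i ≠ R t :=
    fun t i => (H t i).2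
  have hdz : ∀ x y : V, G.dist x y = 0 ↔ x = y := fun x y => hG.dist_eq_zero_iff
  have robstep : ∀ t, G.dist (R t) (R (t + 1)) ≤ 1 := by
    intro t
    rcases hR t with h | h
    · rw [h, SimpleGraph.dist_self]; omega
    · rw [CRAux.adj_dist_one h]
  -- obtain a designated cop and starting round with the base invariant
  obtain ⟨s, i₀, hbase1, hbase2⟩ :
      ∃ (s : ℕ) (i₀ : Fin k), 1 ≤ G.dist (copsAt G (ℓn : ℕ∞) (hyb G σ) R (s + 1) i₀) (R s)
        ∧ G.dist (copsAt G (ℓn : ℕ∞) (hyb G σ) R (s + 1) i₀) (R s) ≤ ℓn := by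
    by_cases hA : ∃ (s : ℕ) (i : Fin k),
        (G.dist (copsAt G (ℓn : ℕ∞) (hyb G σ) R s i) (R s) : ℕ∞) ≤ (ℓn : ℕ∞)
    · obtain ⟨s, i₀, hsd⟩ := hA
      have hEx : ∃ i, (G.dist (copsAt G (ℓn : ℕ∞) (hyb G σ) R s i) (R s) : ℕ∞) ≤ (ℓn : ℕ∞) :=
        ⟨i₀, hsd⟩
      have hmv : ∃ a, copsAt G (ℓn : ℕ∞) (hyb G σ) R (s + 1) i₀
          = CRAux.step G (copsAt G (ℓn : ℕ∞) (hyb G σ) R s i₀) a (R s) := by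
        cases s with
        | zero => exact ⟨R 0, move_E0 G (ℓn : ℕ∞) σ R hEx i₀⟩
        | succ s' => exact ⟨_, move_E G (ℓn : ℕ∞) σ R (s' + 1) (by omega) hEx i₀⟩
      obtain ⟨a, hmv⟩ := hmv
      have hds : G.dist (copsAt G (ℓn : ℕ∞) (hyb G σ) R (s + 1) i₀) (R s) + 1
          = G.dist (copsAt G (ℓn : ℕ∞) (hyb G σ) R s i₀) (R s) := by
        rw [hmv]; exact CRAux.step_dist hG a (H1 s i₀)
      have hcast : G.dist (copsAt G (ℓn : ℕ∞) (hyb G σ) R s i₀) (R s) ≤ ℓn := by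
        exact_mod_cast hsd
      refine ⟨s, i₀, ?_, by omega⟩
      by_contra hh
      have h0 : G.dist (copsAt G (ℓn : ℕ∞) (hyb G σ) R (s + 1) i₀) (R s) = 0 := by omega
      exact H2 s i₀ ((hdz _ _).mp h0)
    · obtain ⟨s, i₀, hsd⟩ := hsight
      rcases hsd with hsd | ⟨s', rfl, hsd⟩
      · exact absurd ⟨s, i₀, hsd⟩ hA
      · have hEn : ¬ ∃ i, (G.dist (copsAt G (ℓn : ℕ∞) (hyb G σ) R (s' + 1) i)
            (R (s' + 1)) : ℕ∞) ≤ (ℓn : ℕ∞) := by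
          intro ⟨i, hi⟩; exact hA ⟨s' + 1, i, hi⟩
        have hM : ∃ i, (G.dist (copsAt G (ℓn : ℕ∞) (hyb G σ) R (s' + 1) i)
            (R (s' + 1 - 1)) : ℕ∞) ≤ (ℓn : ℕ∞) := by
          refine ⟨i₀, ?_⟩; simpa using hsd
        obtain ⟨a, hmv⟩ := move_M G (ℓn : ℕ∞) σ R (s' + 1) (by omega) hEn hM i₀
        have hne : copsAt G (ℓn : ℕ∞) (hyb G σ) R (s' + 1) i₀ ≠ R (s' + 1 - 1) := by
          simpa using H2 s' i₀
        have hds : G.dist (copsAt G (ℓn : ℕ∞) (hyb G σ) R (s' + 1 + 1) i₀) (R s') + 1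
            = G.dist (copsAt G (ℓn : ℕ∞) (hyb G σ) R (s' + 1) i₀) (R s') := by
          rw [hmv]
          have h := CRAux.step_dist hG a hne
          simpa using h
        have hcast : G.dist (copsAt G (ℓn : ℕ∞) (hyb G σ) R (s' + 1) i₀) (R s') ≤ ℓn := by
          exact_mod_cast hsd
        refine ⟨s' + 1, i₀, ?_, ?_⟩
        · by_contra hh
          have h0 : G.dist (copsAt G (ℓn : ℕ∞) (hyb G σ) R (s' + 1 + 1) i₀) (R (s' + 1)) = 0 :=
            by omega
          exact H2 (s' + 1) i₀ ((hdz _ _).mp h0)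
        · have htr : G.dist (copsAt G (ℓn : ℕ∞) (hyb G σ) R (s' + 1 + 1) i₀) (R (s' + 1)) ≤
              G.dist (copsAt G (ℓn : ℕ∞) (hyb G σ) R (s' + 1 + 1) i₀) (R s')
                + G.dist (R s') (R (s' + 1)) := hG.dist_triangle
          have := robstep s'
          omega
  have ind : ∀ t, s ≤ t →
      1 ≤ G.dist (copsAt G (ℓn : ℕ∞) (hyb G σ) R (t + 1) i₀) (R t) →
      G.dist (copsAt G (ℓn : ℕ∞) (hyb G σ) R (t + 1) i₀) (R t) ≤ ℓn →
      1 ≤ G.dist (copsAt G (ℓn : ℕ∞) (hyb G σ) R (t + 1 + 1) i₀) (R (t + 1))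
        ∧ G.dist (copsAt G (ℓn : ℕ∞) (hyb G σ) R (t + 1 + 1) i₀) (R (t + 1))
          ≤ G.dist (copsAt G (ℓn : ℕ∞) (hyb G σ) R (t + 1) i₀) (R t) := by
    intro t hst h1 h2
    have hrs := robstep t
    have hcapnext : G.dist (copsAt G (ℓn : ℕ∞) (hyb G σ) R (t + 1 + 1) i₀) (R (t + 1)) ≠ 0 := by
      intro h0
      exact H2 (t + 1) i₀ ((hdz _ _).mp h0)
    by_cases hE1 : ∃ i, (G.dist (copsAt G (ℓn : ℕ∞) (hyb G σ) R (t + 1) i)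
        (R (t + 1)) : ℕ∞) ≤ (ℓn : ℕ∞)
    · have hmv := move_E G (ℓn : ℕ∞) σ R (t + 1) (by omega) hE1 i₀
      have hds : G.dist (copsAt G (ℓn : ℕ∞) (hyb G σ) R (t + 1 + 1) i₀) (R (t + 1)) + 1
          = G.dist (copsAt G (ℓn : ℕ∞) (hyb G σ) R (t + 1) i₀) (R (t + 1)) := by
        rw [hmv]; exact CRAux.step_dist hG _ (H1 (t + 1) i₀)
      have htr : G.dist (copsAt G (ℓn : ℕ∞) (hyb G σ) R (t + 1) i₀) (R (t + 1)) ≤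
          G.dist (copsAt G (ℓn : ℕ∞) (hyb G σ) R (t + 1) i₀) (R t)
            + G.dist (R t) (R (t + 1)) := hG.dist_triangle
      omega
    · have hM1 : ∃ i, (G.dist (copsAt G (ℓn : ℕ∞) (hyb G σ) R (t + 1) i)
          (R (t + 1 - 1)) : ℕ∞) ≤ (ℓn : ℕ∞) := by
        refine ⟨i₀, ?_⟩
        simp only [Nat.add_sub_cancel]
        exact_mod_cast h2
      obtain ⟨a, hmv⟩ := move_M G (ℓn : ℕ∞) σ R (t + 1) (by omega) hE1 hM1 i₀
      have hne : copsAt G (ℓn : ℕ∞) (hyb G σ) R (t + 1) i₀ ≠ R (t + 1 - 1) := by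
        simpa using H2 t i₀
      have hds : G.dist (copsAt G (ℓn : ℕ∞) (hyb G σ) R (t + 1 + 1) i₀) (R t) + 1
          = G.dist (copsAt G (ℓn : ℕ∞) (hyb G σ) R (t + 1) i₀) (R t) := by
        rw [hmv]
        have h := CRAux.step_dist hG a hne
        simpa using h
      have htr : G.dist (copsAt G (ℓn : ℕ∞) (hyb G σ) R (t + 1 + 1) i₀) (R (t + 1)) ≤
          G.dist (copsAt G (ℓn : ℕ∞) (hyb G σ) R (t + 1 + 1) i₀) (R t)
            + G.dist (R t) (R (t + 1)) := hG.dist_triangle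
      omega
  set m : ℕ → ℕ := fun t => G.dist (copsAt G (ℓn : ℕ∞) (hyb G σ) R (t + 1) i₀) (R t) with hm
  have hmdef : ∀ t, m t = G.dist (copsAt G (ℓn : ℕ∞) (hyb G σ) R (t + 1) i₀) (R t) :=
    fun t => rfl
  have inv : ∀ t, s ≤ t → 1 ≤ m t ∧ m t ≤ ℓn := by
    intro t ht
    induction t, ht using Nat.le_induction with
    | base => exact ⟨hbase1, hbase2⟩
    | succ t ht ih =>
      obtain ⟨a1, a2⟩ := ind t ht ih.1 ih.2
      rw [hmdef]
      exact ⟨a1, le_trans a2 ih.2⟩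
  have mono : ∀ t t', s ≤ t → t ≤ t' → m t' ≤ m t := by
    intro t t' ht htt
    induction t', htt using Nat.le_induction with
    | base => exact le_refl _
    | succ t' htt ih =>
      have h := ind t' (le_trans ht htt) (inv t' (le_trans ht htt)).1 (inv t' (le_trans ht htt)).2
      rw [hmdef] at ih ⊢
      have := h.2
      omega
  have hbne : {v | ∃ t, s ≤ t ∧ m t = v}.Nonempty := ⟨m s, s, le_refl _, rfl⟩
  obtain ⟨T, hTs, hTm⟩ := Nat.sInf_mem hbne
  have hstab : ∀ t, T ≤ t → m t = m T := by
    intro t ht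
    have h1 : m t ≤ m T := mono T t hTs ht
    have h2 : sInf {v | ∃ t, s ≤ t ∧ m t = v} ≤ m t :=
      Nat.sInf_le ⟨t, le_trans hTs ht, rfl⟩
    omega
  have hm1 : 1 ≤ m T := (inv T hTs).1
  have hmℓ : m T ≤ ℓn := (inv T hTs).2
  have hstab' : ∀ t, T ≤ t →
      G.dist (copsAt G (ℓn : ℕ∞) (hyb G σ) R (t + 1) i₀) (R t) = m T := by
    intro t ht
    rw [← hmdef t]
    exact hstab t ht
  -- F2 : pre-move distance to the current robber position is (m T) + 1
  have F2 : ∀ t, T ≤ t →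
      G.dist (copsAt G (ℓn : ℕ∞) (hyb G σ) R (t + 1) i₀) (R (t + 1)) = m T + 1 := by
    intro t ht
    have hmt := hstab' t ht
    have hmt1 := hstab' (t + 1) (by omega)
    by_cases hE1 : ∃ i, (G.dist (copsAt G (ℓn : ℕ∞) (hyb G σ) R (t + 1) i)
        (R (t + 1)) : ℕ∞) ≤ (ℓn : ℕ∞)
    · have hmv := move_E G (ℓn : ℕ∞) σ R (t + 1) (by omega) hE1 i₀
      have hds : G.dist (copsAt G (ℓn : ℕ∞) (hyb G σ) R (t + 1 + 1) i₀) (R (t + 1)) + 1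
          = G.dist (copsAt G (ℓn : ℕ∞) (hyb G σ) R (t + 1) i₀) (R (t + 1)) := by
        rw [hmv]; exact CRAux.step_dist hG _ (H1 (t + 1) i₀)
      omega
    · push_neg at hE1
      have hgt' : ℓn < G.dist (copsAt G (ℓn : ℕ∞) (hyb G σ) R (t + 1) i₀) (R (t + 1)) := by
        exact_mod_cast hE1 i₀
      have htr : G.dist (copsAt G (ℓn : ℕ∞) (hyb G σ) R (t + 1) i₀) (R (t + 1)) ≤
          G.dist (copsAt G (ℓn : ℕ∞) (hyb G σ) R (t + 1) i₀) (R t)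
            + G.dist (R t) (R (t + 1)) := hG.dist_triangle
      have hrs := robstep t
      omega
  -- F1 : the robber moves along an edge every round
  have F1 : ∀ t, T ≤ t → G.Adj (R t) (R (t + 1)) := by
    intro t ht
    rcases hR t with h | h
    · exfalso
      have h2 := F2 t ht
      rw [h] at h2
      have hmt := hstab' t ht
      omega
    · exact h
  -- F3 : the cop also closes in on the robber's previous position
  have F3 : ∀ t, T ≤ t →
      G.dist (copsAt G (ℓn : ℕ∞) (hyb G σ) R (t + 1 + 1) i₀) (R t) + 1 = m T := by
    intro t ht
    have hmt := hstab' t ht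
    by_cases hE1 : ∃ i, (G.dist (copsAt G (ℓn : ℕ∞) (hyb G σ) R (t + 1) i)
        (R (t + 1)) : ℕ∞) ≤ (ℓn : ℕ∞)
    · have hmv := move_E G (ℓn : ℕ∞) σ R (t + 1) (by omega) hE1 i₀
      have hobs : obs G (ℓn : ℕ∞) (copsAt G (ℓn : ℕ∞) (hyb G σ) R (t + 1)) (R (t + 1 - 1))
          = some (R (t + 1 - 1)) := by
        refine obs_some G (ℓn : ℕ∞) ⟨i₀, ?_⟩
        simp only [Nat.add_sub_cancel]
        exact_mod_cast le_trans (le_of_eq hmt) hmℓ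
      rw [hobs] at hmv
      simp only [Nat.add_sub_cancel, Option.getD_some] at hmv
      have hF2 := F2 t ht
      have hnadj : ¬ G.Adj (copsAt G (ℓn : ℕ∞) (hyb G σ) R (t + 1) i₀) (R (t + 1)) := by
        intro hadj
        rw [CRAux.adj_dist_one hadj] at hF2
        omega
      have hda : G.dist (copsAt G (ℓn : ℕ∞) (hyb G σ) R (t + 1 + 1) i₀) (R t) + 1
          = G.dist (copsAt G (ℓn : ℕ∞) (hyb G σ) R (t + 1) i₀) (R t) := by
        rw [hmv]
        exact CRAux.step_dist_a hG (H1 (t + 1) i₀) hnadj (by omega) (F1 t ht)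
      omega
    · have hM1 : ∃ i, (G.dist (copsAt G (ℓn : ℕ∞) (hyb G σ) R (t + 1) i)
          (R (t + 1 - 1)) : ℕ∞) ≤ (ℓn : ℕ∞) := by
        refine ⟨i₀, ?_⟩
        simp only [Nat.add_sub_cancel]
        exact_mod_cast le_trans (le_of_eq hmt) hmℓ
      obtain ⟨a, hmv⟩ := move_M G (ℓn : ℕ∞) σ R (t + 1) (by omega) hE1 hM1 i₀
      have hne : copsAt G (ℓn : ℕ∞) (hyb G σ) R (t + 1) i₀ ≠ R (t + 1 - 1) := by
        simpa using H2 t i₀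
      have hds : G.dist (copsAt G (ℓn : ℕ∞) (hyb G σ) R (t + 1 + 1) i₀) (R t) + 1
          = G.dist (copsAt G (ℓn : ℕ∞) (hyb G σ) R (t + 1) i₀) (R t) := by
        rw [hmv]
        have h := CRAux.step_dist hG a hne
        simpa using h
      omega
  -- F5 : distance-2 windows along the robber's trail
  have F5 : ∀ t, T ≤ t → G.dist (R t) (R (t + 1 + 1)) = 2 := by
    intro t ht
    have h2a := F2 (t + 1) (by omega)
    have h3a := F3 t ht
    have htr : G.dist (copsAt G (ℓn : ℕ∞) (hyb G σ) R (t + 1 + 1) i₀) (R (t + 1 + 1)) ≤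
        G.dist (copsAt G (ℓn : ℕ∞) (hyb G σ) R (t + 1 + 1) i₀) (R t)
          + G.dist (R t) (R (t + 1 + 1)) := hG.dist_triangle
    have hub : G.dist (R t) (R (t + 1 + 1)) ≤ 2 := by
      have h1 := CRAux.adj_dist_one (F1 t ht)
      have h2 := CRAux.adj_dist_one (F1 (t + 1) (by omega))
      have h3 := hG.dist_triangle (u := R t) (v := R (t + 1)) (w := R (t + 1 + 1))
      omega
    omega
  refine CRAux.no_flight hch (fun j => R (T + j)) (fun j => ?_) (fun j => ?_)
  · have h := F1 (T + j) (by omega)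
    have he : T + (j + 1) = T + j + 1 := by omega
    show G.Adj (R (T + j)) (R (T + (j + 1)))
    rw [he]
    exact h
  · have h := F5 (T + j) (by omega)
    have he : T + (j + 2) = T + j + 1 + 1 := by omega
    show G.dist (R (T + j)) (R (T + (j + 2))) = 2
    rw [he]
    exact h

end MainChase

section Assemble

open CopsRobber SimpleGraph

variable {V : Type*}

lemma hybMove_none {G : SimpleGraph V} {k : ℕ} (σ : CopsRobber.CopStrategy G k)
    (h : List (Option V)) (hE : h.getD (h.length - 1) none = none)
    (hM : h.getD (h.length - 2) none = none) :
    hybMove G σ h = σ.move h := by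
  funext p i
  unfold hybMove
  rw [hE, hM]
  rfl

lemma play_eq_of_no_sight {G : SimpleGraph V} (ℓ : ℕ∞) {k : ℕ}
    (σ : CopsRobber.CopStrategy G k) (R : ℕ → V)
    (hns : ∀ t (i : Fin k),
      ¬ (G.dist (copsAt G ℓ (hyb G σ) R t i) (R t) : ℕ∞) ≤ ℓ ∧
      ∀ t', t = t' + 1 → ¬ (G.dist (copsAt G ℓ (hyb G σ) R t i) (R t') : ℕ∞) ≤ ℓ) :
    ∀ t, play G ℓ (hyb G σ) R t = play G ℓ σ R t := by
  intro t
  induction t with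
  | zero => rfl
  | succ t ih =>
    have hEnone : ((play G ℓ (hyb G σ) R t).2).getD (2 * t) none = none := by
      rw [hist_end]
      exact obs_none G ℓ (fun ⟨i, hi⟩ => (hns t i).1 hi)
    have hMnone : ((play G ℓ (hyb G σ) R t).2).getD (2 * t - 1) none = none := by
      cases t with
      | zero => simpa using hEnone
      | succ t' =>
        rw [show 2 * (t' + 1) - 1 = 2 * t' + 1 from by omega, hist_mid]
        exact obs_none G ℓ (fun ⟨i, hi⟩ => (hns (t' + 1) i).2 t' rfl hi)
    have hlen := hist_length G ℓ R (hyb G σ) t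
    have hmv : hybMove G σ (play G ℓ (hyb G σ) R t).2 = σ.move (play G ℓ (hyb G σ) R t).2 := by
      apply hybMove_none
      · rw [hlen, show 2 * t + 1 - 1 = 2 * t from by omega]
        exact hEnone
      · rw [hlen, show 2 * t + 1 - 2 = 2 * t - 1 from by omega]
        exact hMnone
    have step1 : play G ℓ (hyb G σ) R (t + 1)
        = ((hyb G σ).move (play G ℓ (hyb G σ) R t).2 (play G ℓ (hyb G σ) R t).1,
           ((play G ℓ (hyb G σ) R t).2
              ++ [obs G ℓ ((hyb G σ).move (play G ℓ (hyb G σ) R t).2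
                    (play G ℓ (hyb G σ) R t).1) (R t)])
              ++ [obs G ℓ ((hyb G σ).move (play G ℓ (hyb G σ) R t).2
                    (play G ℓ (hyb G σ) R t).1) (R (t + 1))]) := rfl
    rw [step1]
    have step2 : (hyb G σ).move (play G ℓ (hyb G σ) R t).2 (play G ℓ (hyb G σ) R t).1
        = σ.move (play G ℓ σ R t).2 (play G ℓ σ R t).1 := by
      show hybMove G σ (play G ℓ (hyb G σ) R t).2 (play G ℓ (hyb G σ) R t).1 = _
      rw [hmv, ih]
    rw [step2, ih]
    rfl

lemma exists_capture_full [Fintype V] (G : SimpleGraph V) (ℓ : ℕ∞) :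
    ∃ σ : CopsRobber.CopStrategy G (Fintype.card V),
      ∀ R, CopsRobber.RobberWalk G R → CopsRobber.Captures G ℓ σ R := by
  classical
  refine ⟨⟨fun i => (Fintype.equivFin V).symm i, fun _ p i => p i,
    fun _ _ _ => Or.inl rfl⟩, ?_⟩
  intro R _
  refine ⟨0, Fintype.equivFin V (R 0), Or.inl ?_⟩
  show (Fintype.equivFin V).symm (Fintype.equivFin V (R 0)) = R 0
  simp

lemma sees_of_captures {G : SimpleGraph V} {ℓ : ℕ∞} {k : ℕ}
    {σ : CopsRobber.CopStrategy G k} {R : ℕ → V}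
    (h : CopsRobber.Captures G ℓ σ R) : CopsRobber.Sees G ℓ σ R := by
  obtain ⟨t, i, h | h⟩ := h
  · refine ⟨t, i, Or.inl ?_⟩
    rw [h, SimpleGraph.dist_self]
    simp
  · refine ⟨t, i, Or.inr ?_⟩
    rw [h, SimpleGraph.dist_self]
    simp

end Assemble

open CopsRobber in
/-- if `G` is chordal and `ℓ ≥ 0`, then `c'_ℓ(G) = c_ℓ(G)`; moreover, once a
single cop is within distance `ℓ` of the robber, that cop alone can capture the robber. -/
theorem chordal_visSeeNumber_eq_visCopNumber {V : Type*} [Fintype V] (G : SimpleGraph V)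
    (hG : G.Connected) (hchord : Chordal G) (ℓ : ℕ) :
    visSeeNumber G (ℓ : ℕ∞) = visCopNumber G (ℓ : ℕ∞) ∧
    ∀ u r : V, G.dist u r ≤ ℓ →
      ∃ σ : CopStrategy G 1, σ.init 0 = u ∧
        ∀ R : ℕ → V, RobberWalk G R → R 0 = r → Captures G (ℓ : ℕ∞) σ R := by
  classical
  have key : ∀ (k : ℕ) (σ : CopStrategy G k),
      (∀ R, RobberWalk G R → Sees G (ℓ : ℕ∞) σ R) →
      ∀ R, RobberWalk G R → Captures G (ℓ : ℕ∞) (hyb G σ) R := by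
    intro k σ hσ R hR
    by_cases hsight : ∃ s i,
        (G.dist (copsAt G (ℓ : ℕ∞) (hyb G σ) R s i) (R s) : ℕ∞) ≤ (ℓ : ℕ∞)
          ∨ ∃ s', s = s' + 1 ∧
            (G.dist (copsAt G (ℓ : ℕ∞) (hyb G σ) R s i) (R s') : ℕ∞) ≤ (ℓ : ℕ∞)
    · exact captures_of_sight hG hchord ℓ σ R hR hsight
    · exfalso
      have hns : ∀ t (i : Fin k),
          ¬ (G.dist (copsAt G (ℓ : ℕ∞) (hyb G σ) R t i) (R t) : ℕ∞) ≤ (ℓ : ℕ∞) ∧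
          ∀ t', t = t' + 1 →
            ¬ (G.dist (copsAt G (ℓ : ℕ∞) (hyb G σ) R t i) (R t') : ℕ∞) ≤ (ℓ : ℕ∞) := by
        intro t i
        constructor
        · intro hcon; exact hsight ⟨t, i, Or.inl hcon⟩
        · intro t' ht' hcon; exact hsight ⟨t, i, Or.inr ⟨t', ht', hcon⟩⟩
      have hpe := play_eq_of_no_sight (ℓ : ℕ∞) σ R hns
      have hcc : ∀ t, copsAt G (ℓ : ℕ∞) σ R t = copsAt G (ℓ : ℕ∞) (hyb G σ) R t := by
        intro t
        show (play G (ℓ : ℕ∞) σ R t).1 = (play G (ℓ : ℕ∞) (hyb G σ) R t).1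
        rw [hpe t]
      obtain ⟨t, i, hsee | hsee⟩ := hσ R hR
      · rw [hcc t] at hsee
        exact (hns t i).1 hsee
      · rw [hcc (t + 1)] at hsee
        exact (hns (t + 1) i).2 t rfl hsee
  constructor
  · have hsub : {k | ∃ σ : CopStrategy G k, ∀ R, RobberWalk G R → Captures G (ℓ : ℕ∞) σ R}
        ⊆ {k | ∃ σ : CopStrategy G k, ∀ R, RobberWalk G R → Sees G (ℓ : ℕ∞) σ R} := by
      rintro n ⟨σ, hσ⟩
      exact ⟨σ, fun R hR => sees_of_captures (hσ R hR)⟩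
    have hCne : {k | ∃ σ : CopStrategy G k,
        ∀ R, RobberWalk G R → Captures G (ℓ : ℕ∞) σ R}.Nonempty :=
      ⟨Fintype.card V, exists_capture_full G (ℓ : ℕ∞)⟩
    have hSne : {k | ∃ σ : CopStrategy G k,
        ∀ R, RobberWalk G R → Sees G (ℓ : ℕ∞) σ R}.Nonempty :=
      ⟨Fintype.card V, hsub (exists_capture_full G (ℓ : ℕ∞))⟩
    apply le_antisymm
    · exact Nat.sInf_le (hsub (Nat.sInf_mem hCne))
    · obtain ⟨σ, hσ⟩ := Nat.sInf_mem hSne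
      exact Nat.sInf_le ⟨hyb G σ, fun R hR => key _ σ hσ R hR⟩
  · intro u r hur
    refine ⟨hyb G (⟨fun _ => u, fun _ p i => p i, fun _ _ _ => Or.inl rfl⟩ :
      CopStrategy G 1), rfl, ?_⟩
    intro R hR hR0
    apply captures_of_sight hG hchord ℓ _ R hR
    refine ⟨0, 0, Or.inl ?_⟩
    show (G.dist u (R 0) : ℕ∞) ≤ (ℓ : ℕ∞)
    rw [hR0]
    exact_mod_cast hur
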